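/- arXiv:2212.08984 — 3 statements merged into one kernel-verified Lean document; each statement's English description precedes it below -/
import Mathlib

section
/- Let d, r_r, d_r^l, r_safe, d_max ≥ 0 and φ ∈ ℝ with d_r^l > r_safe + d_max + r_r. If 0 ≤ d ≤ r_r·cos(φ) + sqrt((d_r^l − r_safe − d_max)² − r_r²·sin²(φ)), then d_r^l − sqrt(d² + r_r² − 2·d·r_r·cos(φ)) ≥ r_safe + d_max. -/
open Real

/-- Dynamic collision avoidance: if the step length d satisfies the bound of
Eq. (15), then after moving the robot stays at least r_safe + d_max from the
virtual source of a neighboring robot. -/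
theorem dyn_obstacle_step_bound
    (d rr drl rsafe dmax φ : ℝ)
    (hd0 : 0 ≤ d) (hrr : 0 ≤ rr) (hdrl : 0 ≤ drl) (hrs : 0 ≤ rsafe) (hdm : 0 ≤ dmax)
    (hfar : rsafe + dmax + rr < drl)
    (hdle : d ≤ rr * Real.cos φ +
      Real.sqrt ((drl - rsafe - dmax) ^ 2 - rr ^ 2 * Real.sin φ ^ 2)) :
    rsafe + dmax ≤ drl - Real.sqrt (d ^ 2 + rr ^ 2 - 2 * d * rr * Real.cos φ) := by
  have hRrr : rr < drl - rsafe - dmax := by linarith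
  have hR0 : (0:ℝ) < drl - rsafe - dmax := lt_of_le_of_lt hrr hRrr
  have hpyth := Real.sin_sq_add_cos_sq φ
  have hkey : d ^ 2 + rr ^ 2 - 2 * d * rr * Real.cos φ ≤ (drl - rsafe - dmax) ^ 2 := by
    rcases le_or_gt (rr * Real.cos φ) d with h | h
    · have hin : 0 ≤ (drl - rsafe - dmax) ^ 2 - rr ^ 2 * Real.sin φ ^ 2 := by
        nlinarith [Real.sin_sq_le_one φ, sq_nonneg rr]
      have hs := Real.sq_sqrt hin
      have h1 : d - rr * Real.cos φ ≤
          Real.sqrt ((drl - rsafe - dmax) ^ 2 - rr ^ 2 * Real.sin φ ^ 2) := by linarith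
      nlinarith [Real.sqrt_nonneg ((drl - rsafe - dmax) ^ 2 - rr ^ 2 * Real.sin φ ^ 2)]
    · nlinarith [mul_nonneg hd0 (le_trans hd0 h.le), sq_nonneg rr]
  have h2 : Real.sqrt (d ^ 2 + rr ^ 2 - 2 * d * rr * Real.cos φ) ≤ drl - rsafe - dmax := by
    rw [show drl - rsafe - dmax = Real.sqrt ((drl - rsafe - dmax) ^ 2) from
      (Real.sqrt_sq hR0.le).symm]
    exact Real.sqrt_le_sqrt hkey
  linarith
end

section
/- For r_r > 0 and r_safe > r_r fixed, the function p ↦ (r_safe + r_r·cos(π/p) − sqrt(r_safe² + r_r² − 2·r_r·r_safe·cos(π/p)))/2, viewed as a function of x = cos(π/p) ∈ [1/2, 1), is strictly increasing, and tends to r_r as x → 1 (i.e., as p → ∞). -/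
open Real Filter

/-- As a function of x = cos(π/p) ∈ [1/2, 1), the step-size bound
x ↦ (r_safe + r_r·x − √(r_safe² + r_r² − 2 r_r r_safe x))/2 is strictly increasing,
and tends to r_r as x → 1 (i.e. as p → ∞). -/
theorem dmax_strictMono_and_limit (rr rsafe : ℝ) (hrr : 0 < rr) (hrs : rr < rsafe) :
    StrictMonoOn
      (fun x : ℝ => (rsafe + rr * x -
        Real.sqrt (rsafe ^ 2 + rr ^ 2 - 2 * rr * rsafe * x)) / 2)
      (Set.Ico (1/2 : ℝ) 1) ∧
    Tendsto
      (fun x : ℝ => (rsafe + rr * x -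
        Real.sqrt (rsafe ^ 2 + rr ^ 2 - 2 * rr * rsafe * x)) / 2)
      (nhdsWithin 1 (Set.Iio 1)) (nhds rr) := by
  constructor
  · intro x hx y hy hxy
    simp only
    have hx0 : (0:ℝ) ≤ rsafe ^ 2 + rr ^ 2 - 2 * rr * rsafe * y := by
      nlinarith [mul_pos hrr (hrr.trans hrs), hy.2, sq_nonneg (rsafe - rr), mul_pos (mul_pos hrr (hrr.trans hrs)) (sub_pos.mpr hy.2)]
    have hlt : rsafe ^ 2 + rr ^ 2 - 2 * rr * rsafe * y
        < rsafe ^ 2 + rr ^ 2 - 2 * rr * rsafe * x := by nlinarith [mul_pos (mul_pos hrr (hrr.trans hrs)) (sub_pos.mpr hxy)]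
    have hs := Real.sqrt_lt_sqrt hx0 hlt
    nlinarith [hs]
  · have hc : ContinuousAt (fun x : ℝ => (rsafe + rr * x -
        Real.sqrt (rsafe ^ 2 + rr ^ 2 - 2 * rr * rsafe * x)) / 2) 1 := by
      fun_prop
    have hval : (rsafe + rr * 1 - Real.sqrt (rsafe ^ 2 + rr ^ 2 - 2 * rr * rsafe * 1)) / 2 = rr := by
      have h : rsafe ^ 2 + rr ^ 2 - 2 * rr * rsafe * 1 = (rsafe - rr) ^ 2 := by ring
      rw [h, Real.sqrt_sq (by linarith)]
      ring
    have ht := hc.tendsto.mono_left (nhdsWithin_le_nhds (s := Set.Iio 1))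
    rwa [hval] at ht
end

section
/- If the true direction angle φ of an obstacle relative to the robot center lies within ±π/p of sensor k's direction φ^k, and the motion direction θ lies in the avoidance range [φ^k + π/p + π/2, φ^k − π/p + 3π/2] (mod 2π), then cos(θ − φ) ≤ 0, and hence by the static-obstacle inequality the robot does not decrease its distance to the obstacle. -/
open Real

/-- Avoidance range: if the obstacle direction is φ = φ^k + a with |a| ≤ π/p and the
motion direction is θ = φ^k + b with b in the avoidance range
[π/2 + π/p, 3π/2 − π/p] (the range Θ_s^avo of Eq. (13) taken mod 2π), then
cos(θ − φ) ≤ 0, and hence d² − 2·d·D·cos(θ − φ) ≥ 0 for all d, D ≥ 0: the robot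
does not decrease its distance to the obstacle. -/
theorem avoidance_range_cos_nonpos
    (p : ℕ) (hp : 3 ≤ p) (φ φk θ a b : ℝ)
    (ha : φ = φk + a) (haa : |a| ≤ Real.pi / p)
    (hb : θ = φk + b)
    (hb1 : Real.pi / 2 + Real.pi / p ≤ b) (hb2 : b ≤ 3 * Real.pi / 2 - Real.pi / p) :
    Real.cos (θ - φ) ≤ 0 ∧
    ∀ d D : ℝ, 0 ≤ d → 0 ≤ D → 0 ≤ d ^ 2 - 2 * d * D * Real.cos (θ - φ) := by
  have habs := abs_le.1 haa
  have hcos : Real.cos (θ - φ) ≤ 0 := by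
    have h1 : θ - φ = b - a := by rw [ha, hb]; ring
    rw [h1]
    apply Real.cos_nonpos_of_pi_div_two_le_of_le
    · linarith [habs.2]
    · linarith [habs.1]
  refine ⟨hcos, fun d D hd hD => ?_⟩
  nlinarith [mul_nonneg (mul_nonneg (mul_nonneg (by norm_num : (0:ℝ) ≤ 2) hd) hD) (neg_nonneg.2 hcos), sq_nonneg d]
end
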